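/- If a function f : ℕ → ℕ is defined by composition f = h ∘ g from functions g, h for which totality is provable with basic terms (i.e., A(PR) ⊢_b ∀x ∃y g(x) = y and A(PR) ⊢_b ∀y ∃z h(y) = z), then totality of f is provable with basic terms: A(PR) ⊢_b ∀x ∃z h(g(x)) = z. -/

import Mathlib

open FirstOrder Language

universe u v

namespace PRFpaper

variable (L : FirstOrder.Language.{u, v})

/-- The term `0`. -/
def zeroT (c0 : L.Constants) {α : Type} : L.Term α := Term.func c0 ![]

/-- The term `S t`. -/
def succT (s1 : L.Functions 1) {α : Type} (t : L.Term α) : L.Term α := Term.func s1 ![t]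

/-- The numeral `n̄`: `S` applied `n` times to `0`. -/
def num (c0 : L.Constants) (s1 : L.Functions 1) {α : Type} : ℕ → L.Term α
  | 0 => zeroT L c0
  | n + 1 => succT L s1 (num c0 s1 n)

/-- A program: a set of equations, given as pairs of terms with variables in `ℕ`. -/
abbrev Program := Set (L.Term ℕ × L.Term ℕ)

/-- Derivability in equational logic from the program `P`: the equations of `P`,
reflexivity, substitution of arbitrary terms for variables, and replacement of
equal subterms (which generates symmetry, transitivity and congruence). -/
inductive EqDeriv (P : Program L) : L.Term ℕ → L.Term ℕ → Prop
  | ax {s t : L.Term ℕ} : (s, t) ∈ P → EqDeriv P s t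
  | refl (t : L.Term ℕ) : EqDeriv P t t
  | subst {s t : L.Term ℕ} (σ : ℕ → L.Term ℕ) :
      EqDeriv P s t → EqDeriv P (s.subst σ) (t.subst σ)
  | symm {s t : L.Term ℕ} : EqDeriv P s t → EqDeriv P t s
  | trans {s t r : L.Term ℕ} : EqDeriv P s t → EqDeriv P t r → EqDeriv P s r
  | congr {n : ℕ} (f : L.Functions n) (ts us : Fin n → L.Term ℕ) :
      (∀ i, EqDeriv P (ts i) (us i)) → EqDeriv P (Term.func f ts) (Term.func f us)

/-- `P` is coherent: it derives no equation between two distinct numerals. -/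
def Coherent (c0 : L.Constants) (s1 : L.Functions 1) (P : Program L) : Prop :=
  ∀ m n : ℕ, m ≠ n → ¬ EqDeriv L P (num L c0 s1 m) (num L c0 s1 n)

section Semantics

variable (c0 : L.Constants) (s1 : L.Functions 1)
variable (M : Type w) [L.Structure M]

/-- The interpretation of `0` in `M`. -/
def zeroM : M := Structure.funMap c0 Matrix.vecEmpty

/-- The interpretation of `S` in `M`. -/
def succM (x : M) : M := Structure.funMap s1 ![x]

/-- `M` satisfies (the universal closures of) all equations of `P`. -/
def SatP (P : Program L) : Prop :=
  ∀ e ∈ P, ∀ v : ℕ → M, Term.realize v e.1 = Term.realize v e.2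

/-- `M` satisfies the separation axioms `∀x (S x ≠ 0)` and `∀x∀y (S x = S y → x = y)`. -/
def SatSep : Prop :=
  (∀ x : M, succM L s1 M x ≠ zeroM L c0 M) ∧
  (∀ x y : M, succM L s1 M x = succM L s1 M y → x = y)

/-- `M` satisfies every instance of the first-order induction schema
`A[0] → (∀x (A[x] → A[S x])) → ∀x A[x]`. -/
def SatInd : Prop :=
  ∀ (φ : L.BoundedFormula ℕ 1) (v : ℕ → M),
    φ.Realize v ![zeroM L c0 M] →
    (∀ x : M, φ.Realize v ![x] → φ.Realize v ![succM L s1 M x]) →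
    ∀ x : M, φ.Realize v ![x]

end Semantics

/-- `P` is strongly coherent: the theory `A(P)` (universal closures of the
equations of `P`, the separation axioms and full first-order induction) is
consistent, i.e. (by completeness) has a model. -/
def StronglyCoherent (c0 : L.Constants) (s1 : L.Functions 1) (P : Program L) : Prop :=
  ∃ (M : Type (max u v)) (_ : L.Structure M), Nonempty M ∧
    SatP L M P ∧ SatSep L c0 s1 M ∧ SatInd L c0 s1 M

/-- Instantiation of the (outermost) bound variable of a formula with one free
bound variable by a term. -/
def inst1 (φ : L.BoundedFormula ℕ 1) (t : L.Term ℕ) : L.Formula ℕ :=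
  φ.toFormula.subst (Sum.elim Term.var fun _ => t)

/-- Substitute the bound variable of `φ` by a term possibly mentioning the bound
variable, staying a formula with one bound-variable slot. -/
def bsubst (φ : L.BoundedFormula ℕ 1) (t : L.Term (ℕ ⊕ Fin 1)) : L.BoundedFormula ℕ 1 :=
  (φ.toFormula.subst (Sum.elim (fun i => Term.var (Sum.inl i)) fun _ => t)).relabel id

/-- `φ[S x / x]` for the bound variable `x`. -/
def shiftS (s1 : L.Functions 1) (φ : L.BoundedFormula ℕ 1) : L.BoundedFormula ℕ 1 :=
  bsubst L φ (succT L s1 (Term.var (Sum.inr 0)))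

/-- Basic terms: built only from `0`, `S` and variables. -/
inductive IsBasic (c0 : L.Constants) (s1 : L.Functions 1) : L.Term ℕ → Prop
  | var (x : ℕ) : IsBasic c0 s1 (Term.var x)
  | zero : IsBasic c0 s1 (zeroT L c0)
  | succ {t : L.Term ℕ} : IsBasic c0 s1 t → IsBasic c0 s1 (succT L s1 t)

/-- Classical natural deduction with equality, from a theory `T` (whose members
behave as universally closed axioms: their free variables are never eigenvariables)
and open assumptions `Γ`, where the terms used in universal elimination and
existential introduction are restricted to the class `B`. -/
inductive Prv (B : L.Term ℕ → Prop) (T : Set (L.Formula ℕ)) :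
    Set (L.Formula ℕ) → L.Formula ℕ → Prop
  | ax {Γ φ} : φ ∈ T → Prv B T Γ φ
  | hyp {Γ φ} : φ ∈ Γ → Prv B T Γ φ
  | impI {Γ φ ψ} : Prv B T (insert φ Γ) ψ → Prv B T Γ (φ.imp ψ)
  | impE {Γ φ ψ} : Prv B T Γ (φ.imp ψ) → Prv B T Γ φ → Prv B T Γ ψ
  | botE {Γ φ} : Prv B T Γ ⊥ → Prv B T Γ φ
  | dne {Γ φ} : Prv B T Γ φ.not.not → Prv B T Γ φ
  | allI {Γ} {φ : L.BoundedFormula ℕ 1} {y : ℕ} :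
      Prv B T Γ (inst1 L φ (Term.var y)) →
      (∀ ψ ∈ Γ, y ∉ ψ.freeVarFinset) → y ∉ φ.all.freeVarFinset →
      Prv B T Γ φ.all
  | allE {Γ} {φ : L.BoundedFormula ℕ 1} {t} :
      B t → Prv B T Γ φ.all → Prv B T Γ (inst1 L φ t)
  | exI {Γ} {φ : L.BoundedFormula ℕ 1} {t} :
      B t → Prv B T Γ (inst1 L φ t) → Prv B T Γ φ.ex
  | exE {Γ C} {φ : L.BoundedFormula ℕ 1} {y : ℕ} :
      Prv B T Γ φ.ex → Prv B T (insert (inst1 L φ (Term.var y)) Γ) C →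
      (∀ ψ ∈ Γ, y ∉ ψ.freeVarFinset) → y ∉ φ.all.freeVarFinset → y ∉ C.freeVarFinset →
      Prv B T Γ C
  | eqRefl (Γ) (t : L.Term ℕ) : Prv B T Γ (Term.equal t t)
  | eqSubst {Γ} {φ : L.BoundedFormula ℕ 1} {t s : L.Term ℕ} :
      Prv B T Γ (Term.equal t s) → Prv B T Γ (inst1 L φ t) → Prv B T Γ (inst1 L φ s)

/-- The equation `s = t` as a formula (an axiom with free variables, behaving as
its universal closure). -/
def eqAx (e : L.Term ℕ × L.Term ℕ) : L.Formula ℕ := Term.equal e.1 e.2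

/-- The separation axiom `∀x (S x ≠ 0)`. -/
def sepAx1 (c0 : L.Constants) (s1 : L.Functions 1) : L.Formula ℕ :=
  (BoundedFormula.equal (succT L s1 (Term.var (Sum.inr 0))) (zeroT L c0)).not.all

/-- The separation axiom `∀x∀y (S x = S y → x = y)`. -/
def sepAx2 (s1 : L.Functions 1) : L.Formula ℕ :=
  (((BoundedFormula.equal (succT L s1 (Term.var (Sum.inr 0)))
      (succT L s1 (Term.var (Sum.inr 1)))).imp
    (BoundedFormula.equal (Term.var (Sum.inr (0 : Fin 2))) (Term.var (Sum.inr 1)))).all).all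

/-- The induction axiom for the formula `φ`:
`φ[0] → (∀x (φ[x] → φ[S x])) → ∀x φ[x]`. -/
def indAx (c0 : L.Constants) (s1 : L.Functions 1) (φ : L.BoundedFormula ℕ 1) : L.Formula ℕ :=
  (inst1 L φ (zeroT L c0)).imp (((φ.imp (shiftS L s1 φ)).all).imp φ.all)

/-- The axioms of the theory `A(P)`. -/
def TheoryAP (c0 : L.Constants) (s1 : L.Functions 1) (P : Program L) : Set (L.Formula ℕ) :=
  {φ | ∃ e ∈ P, φ = eqAx L e} ∪ {sepAx1 L c0 s1, sepAx2 L s1} ∪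
    Set.range (indAx L c0 s1)

end PRFpaper

namespace PRFpaper

/-- The totality formula `∀x ∃y (g(x) = y)` for a unary function symbol `g`. -/
def tot1 (L : FirstOrder.Language.{u, v}) (g : L.Functions 1) : L.Formula ℕ :=
  (((BoundedFormula.equal (Term.func g ![Term.var (Sum.inr (0 : Fin 2))])
      (Term.var (Sum.inr (1 : Fin 2)))).ex).all)

/-- The totality formula `∀x ∃z (h(g(x)) = z)` for the composition. -/
def totComp (L : FirstOrder.Language.{u, v}) (g h : L.Functions 1) : L.Formula ℕ :=
  (((BoundedFormula.equal
      (Term.func h ![(Term.func g ![Term.var (Sum.inr (0 : Fin 2))])])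
      (Term.var (Sum.inr (1 : Fin 2)))).ex).all)
section CompositionAux

variable {L : FirstOrder.Language.{u, v}}

/-- The substitution describing instantiation of the outer bound variable under `∀∃`. -/
def sig2 (u : L.Term ℕ) : ℕ ⊕ Fin 2 → L.Term (ℕ ⊕ Fin 1) :=
  Sum.elim (fun n => Term.var (Sum.inl n)) ![u.relabel Sum.inl, Term.var (Sum.inr 0)]

private theorem fmap_eq (u : L.Term ℕ) (t : L.Term (ℕ ⊕ Fin 2)) :
    (((t.relabel Sum.inl).relabel (BoundedFormula.relabelAux
        (Sum.elim (Sum.inl ∘ Sum.inl) (Sum.map Sum.inr id ∘ finSumFinEquiv.symm)) 0)).subst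
      (Sum.elim (Term.relabel Sum.inl ∘ Sum.elim Term.var fun _ => u) (Term.var ∘ Sum.inr)))
      = t.subst (sig2 u) := by
  induction t with
  | var i =>
    rcases i with n | j
    · rfl
    · fin_cases j <;> rfl
  | func f ts ih =>
    show Term.func f _ = Term.func f _
    congr 1
    funext i
    exact ih i

theorem inst1_ex_equal (t₁ t₂ : L.Term (ℕ ⊕ Fin 2)) (u : L.Term ℕ) :
    inst1 L ((BoundedFormula.equal t₁ t₂).ex) u =
      (BoundedFormula.equal (t₁.subst (sig2 u)) (t₂.subst (sig2 u))).ex := by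
  have hr : inst1 L ((BoundedFormula.equal t₁ t₂).ex) u =
      (BoundedFormula.equal
        (((t₁.relabel Sum.inl).relabel (BoundedFormula.relabelAux
            (Sum.elim (Sum.inl ∘ Sum.inl) (Sum.map Sum.inr id ∘ finSumFinEquiv.symm)) 0)).subst
          (Sum.elim (Term.relabel Sum.inl ∘ Sum.elim Term.var fun _ => u) (Term.var ∘ Sum.inr)))
        (((t₂.relabel Sum.inl).relabel (BoundedFormula.relabelAux
            (Sum.elim (Sum.inl ∘ Sum.inl) (Sum.map Sum.inr id ∘ finSumFinEquiv.symm)) 0)).subst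
          (Sum.elim (Term.relabel Sum.inl ∘ Sum.elim Term.var fun _ => u) (Term.var ∘ Sum.inr)))).ex := rfl
  rw [hr, fmap_eq, fmap_eq]

private theorem gmap_eq (u : L.Term ℕ) (a : L.Term (ℕ ⊕ Fin 1)) :
    ((a.relabel (Sum.inl : (ℕ ⊕ Fin 1) → (ℕ ⊕ Fin 1) ⊕ Fin 0)).subst
      (Sum.elim (Term.relabel (Sum.inl : ℕ → ℕ ⊕ Fin 0) ∘ Sum.elim Term.var fun _ => u)
        (Term.var ∘ Sum.inr)))
      = (a.subst (Sum.elim Term.var fun _ => u)).relabel (Sum.inl : ℕ → ℕ ⊕ Fin 0) := by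
  induction a with
  | var i =>
    rcases i with n | j
    · rfl
    · fin_cases j <;> rfl
  | func f ts ih =>
    show Term.func f _ = Term.func f _
    congr 1
    funext i
    exact ih i

theorem inst1_equal (a b : L.Term (ℕ ⊕ Fin 1)) (u : L.Term ℕ) :
    inst1 L (BoundedFormula.equal a b) u =
      Term.equal (a.subst (Sum.elim Term.var fun _ => u))
        (b.subst (Sum.elim Term.var fun _ => u)) := by
  have hr : inst1 L (BoundedFormula.equal a b) u =
      BoundedFormula.equal
        ((a.relabel (Sum.inl : (ℕ ⊕ Fin 1) → (ℕ ⊕ Fin 1) ⊕ Fin 0)).subst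
          (Sum.elim (Term.relabel (Sum.inl : ℕ → ℕ ⊕ Fin 0) ∘ Sum.elim Term.var fun _ => u)
            (Term.var ∘ Sum.inr)))
        ((b.relabel (Sum.inl : (ℕ ⊕ Fin 1) → (ℕ ⊕ Fin 1) ⊕ Fin 0)).subst
          (Sum.elim (Term.relabel (Sum.inl : ℕ → ℕ ⊕ Fin 0) ∘ Sum.elim Term.var fun _ => u)
            (Term.var ∘ Sum.inr))) := rfl
  rw [hr, gmap_eq, gmap_eq]
  rfl

theorem subst_func1 {α β : Type} (f1 : L.Functions 1) (t : L.Term α) (σ : α → L.Term β) :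
    (Term.func f1 ![t]).subst σ = Term.func f1 ![t.subst σ] := by
  show Term.func f1 _ = Term.func f1 _
  congr 1
  funext i
  fin_cases i
  rfl

end CompositionAux



/-- If totality of `g` and of `h` is provable with basic terms
(in particular in `A(PR)`, or from any theory `T`), then totality of the
composition `h ∘ g` is provable with basic terms:
`⊢_b ∀x ∃z (h(g(x)) = z)`. -/
theorem totality_of_composition_basic (L : FirstOrder.Language.{u, v})
    (c0 : L.Constants) (s1 : L.Functions 1) (g h : L.Functions 1)
    (T : Set (L.Formula ℕ))
    (hg : Prv L (IsBasic L c0 s1) T ∅ (tot1 L g))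
    (hh : Prv L (IsBasic L c0 s1) T ∅ (tot1 L h)) :
    Prv L (IsBasic L c0 s1) T ∅ (totComp L g h) := by
  classical
  -- instantiation computations
  have hexg : inst1 L ((BoundedFormula.equal (Term.func g ![Term.var (Sum.inr (0 : Fin 2))])
        (Term.var (Sum.inr (1 : Fin 2)))).ex) (Term.var 0)
      = (BoundedFormula.equal (Term.func g ![Term.var (Sum.inl 0)])
          (Term.var (Sum.inr 0))).ex := by
    rw [inst1_ex_equal, subst_func1]; rfl
  have hexh : inst1 L ((BoundedFormula.equal (Term.func h ![Term.var (Sum.inr (0 : Fin 2))])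
        (Term.var (Sum.inr (1 : Fin 2)))).ex) (Term.var 1)
      = (BoundedFormula.equal (Term.func h ![Term.var (Sum.inl 1)])
          (Term.var (Sum.inr 0))).ex := by
    rw [inst1_ex_equal, subst_func1]; rfl
  have hC : inst1 L ((BoundedFormula.equal
        (Term.func h ![(Term.func g ![Term.var (Sum.inr (0 : Fin 2))])])
        (Term.var (Sum.inr (1 : Fin 2)))).ex) (Term.var 0)
      = (BoundedFormula.equal (Term.func h ![Term.func g ![Term.var (Sum.inl 0)] ])
          (Term.var (Sum.inr 0))).ex := by
    rw [inst1_ex_equal, subst_func1, subst_func1]; rfl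
  have hHg : inst1 L (BoundedFormula.equal (Term.func g ![Term.var (Sum.inl 0)])
        (Term.var (Sum.inr 0))) (Term.var 1)
      = Term.equal (Term.func g ![Term.var 0]) (Term.var 1) := by
    rw [inst1_equal, subst_func1]; rfl
  have hHh : inst1 L (BoundedFormula.equal (Term.func h ![Term.var (Sum.inl 1)])
        (Term.var (Sum.inr 0))) (Term.var 2)
      = Term.equal (Term.func h ![Term.var 1]) (Term.var 2) := by
    rw [inst1_equal, subst_func1]; rfl
  have hrefl : inst1 L (BoundedFormula.equal (Term.var (Sum.inr 0))
        (Term.func g ![Term.var (Sum.inl 0)])) (Term.func g ![Term.var 0])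
      = Term.equal (Term.func g ![Term.var 0]) (Term.func g ![Term.var 0]) := by
    rw [inst1_equal, subst_func1]; rfl
  have hsym : inst1 L (BoundedFormula.equal (Term.var (Sum.inr 0))
        (Term.func g ![Term.var (Sum.inl 0)])) (Term.var 1)
      = Term.equal (Term.var 1) (Term.func g ![Term.var 0]) := by
    rw [inst1_equal, subst_func1]; rfl
  have hr1 : inst1 L (BoundedFormula.equal (Term.func h ![Term.var (Sum.inr 0)])
        (Term.var (Sum.inl 2))) (Term.var 1)
      = Term.equal (Term.func h ![Term.var 1]) (Term.var 2) := by
    rw [inst1_equal, subst_func1]; rfl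
  have hr2 : inst1 L (BoundedFormula.equal (Term.func h ![Term.var (Sum.inr 0)])
        (Term.var (Sum.inl 2))) (Term.func g ![Term.var 0])
      = Term.equal (Term.func h ![Term.func g ![Term.var 0] ]) (Term.var 2) := by
    rw [inst1_equal, subst_func1]; rfl
  have hexI : inst1 L (BoundedFormula.equal (Term.func h ![Term.func g ![Term.var (Sum.inl 0)] ])
        (Term.var (Sum.inr 0))) (Term.var 2)
      = Term.equal (Term.func h ![Term.func g ![Term.var 0] ]) (Term.var 2) := by
    rw [inst1_equal, subst_func1, subst_func1]; rfl
  -- derivation of ∃y g(x₀) = y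
  have E1 : Prv L (IsBasic L c0 s1) T ∅ ((BoundedFormula.equal
      (Term.func g ![Term.var (Sum.inl 0)]) (Term.var (Sum.inr 0))).ex) := by
    have := Prv.allE (IsBasic.var (c0 := c0) (s1 := s1) 0) hg
    rwa [hexg] at this
  -- the key implication, derived with no open assumptions
  have K : Prv L (IsBasic L c0 s1) T ∅
      (((BoundedFormula.equal (Term.func g ![Term.var (Sum.inl 0)])
          (Term.var (Sum.inr 0))).ex).imp
        ((tot1 L h).imp ((BoundedFormula.equal
          (Term.func h ![Term.func g ![Term.var (Sum.inl 0)] ])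
          (Term.var (Sum.inr 0))).ex))) := by
    apply Prv.impI
    apply Prv.impI
    refine Prv.exE (y := 1)
      (φ := BoundedFormula.equal (Term.func g ![Term.var (Sum.inl 0)]) (Term.var (Sum.inr 0)))
      (Prv.hyp (by simp)) ?_ ?_ ?_ ?_
    · -- main branch, context: g(x₀)=x₁, tot1 h, ∃y g(x₀)=y
      rw [hHg]
      have hypTot : Prv L (IsBasic L c0 s1) T
          (insert (Term.equal (Term.func g ![Term.var 0]) (Term.var 1))
            (insert (tot1 L h) (insert ((BoundedFormula.equal
              (Term.func g ![Term.var (Sum.inl 0)]) (Term.var (Sum.inr 0))).ex) ∅)))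
          (tot1 L h) := Prv.hyp (by simp)
      have e2 := Prv.allE (IsBasic.var (c0 := c0) (s1 := s1) 1) hypTot
      rw [hexh] at e2
      refine Prv.exE (y := 2)
        (φ := BoundedFormula.equal (Term.func h ![Term.var (Sum.inl 1)]) (Term.var (Sum.inr 0)))
        e2 ?_ ?_ ?_ ?_
      · -- innermost: also h(x₁)=x₂ available
        rw [hHh]
        have hyp_g : Prv L (IsBasic L c0 s1) T
            (insert (Term.equal (Term.func h ![Term.var 1]) (Term.var 2))
              (insert (Term.equal (Term.func g ![Term.var 0]) (Term.var 1))
                (insert (tot1 L h) (insert ((BoundedFormula.equal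
                  (Term.func g ![Term.var (Sum.inl 0)]) (Term.var (Sum.inr 0))).ex) ∅))))
            (Term.equal (Term.func g ![Term.var 0]) (Term.var 1)) := Prv.hyp (by simp)
        have step1 : Prv L (IsBasic L c0 s1) T
            (insert (Term.equal (Term.func h ![Term.var 1]) (Term.var 2))
              (insert (Term.equal (Term.func g ![Term.var 0]) (Term.var 1))
                (insert (tot1 L h) (insert ((BoundedFormula.equal
                  (Term.func g ![Term.var (Sum.inl 0)]) (Term.var (Sum.inr 0))).ex) ∅))))
            (Term.equal (Term.var 1) (Term.func g ![Term.var 0])) := by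
          have := Prv.eqSubst (φ := BoundedFormula.equal (Term.var (Sum.inr 0))
              (Term.func g ![Term.var (Sum.inl 0)])) hyp_g
            (by rw [hrefl]; exact Prv.eqRefl _ _)
          rwa [hsym] at this
        have hyp_h : Prv L (IsBasic L c0 s1) T
            (insert (Term.equal (Term.func h ![Term.var 1]) (Term.var 2))
              (insert (Term.equal (Term.func g ![Term.var 0]) (Term.var 1))
                (insert (tot1 L h) (insert ((BoundedFormula.equal
                  (Term.func g ![Term.var (Sum.inl 0)]) (Term.var (Sum.inr 0))).ex) ∅))))
            (Term.equal (Term.func h ![Term.var 1]) (Term.var 2)) := Prv.hyp (by simp)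
        have step2 := Prv.eqSubst (φ := BoundedFormula.equal
            (Term.func h ![Term.var (Sum.inr 0)]) (Term.var (Sum.inl 2))) step1
          (by rw [hr1]; exact hyp_h)
        rw [hr2] at step2
        exact Prv.exI (IsBasic.var (c0 := c0) (s1 := s1) 2) (by rw [hexI]; exact step2)
      · intro ψ hψ
        simp only [Set.mem_insert_iff, Set.mem_empty_iff_false, or_false] at hψ
        rcases hψ with rfl | rfl | rfl
        · simp [Term.equal, Term.bdEqual]
        · simp [tot1, BoundedFormula.ex, BoundedFormula.not]
        · simp [BoundedFormula.ex, BoundedFormula.not]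
      · simp [BoundedFormula.ex, BoundedFormula.not]
      · simp [BoundedFormula.ex, BoundedFormula.not]
    · intro ψ hψ
      simp only [Set.mem_insert_iff, Set.mem_empty_iff_false, or_false] at hψ
      rcases hψ with rfl | rfl
      · simp [tot1, BoundedFormula.ex, BoundedFormula.not]
      · simp [BoundedFormula.ex, BoundedFormula.not]
    · simp [BoundedFormula.ex, BoundedFormula.not]
    · simp [BoundedFormula.ex, BoundedFormula.not]
  have EC : Prv L (IsBasic L c0 s1) T ∅ ((BoundedFormula.equal
      (Term.func h ![Term.func g ![Term.var (Sum.inl 0)] ]) (Term.var (Sum.inr 0))).ex) :=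
    Prv.impE (Prv.impE K E1) hh
  refine Prv.allI (y := 0) ?_ ?_ ?_
  · rw [hC]; exact EC
  · intro ψ hψ
    exact absurd hψ (Set.notMem_empty ψ)
  · simp [totComp, BoundedFormula.ex, BoundedFormula.not]

end PRFpaper
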